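/- arXiv:math/0612097 — 6 statements merged into one kernel-verified Lean document; each statement's English description precedes it below -/
import Mathlib

section
/- Let x(s) = c₁q^s + c₂q^{-s} + c₃ be a q-quadratic lattice and x_k(s) = x(s+k/2). Then there exist constants A, B, C ∈ ℂ (depending on q, c₁, c₂, c₃ but not on s) such that for all integers s and all integers k, x_k(s)·x_k(s-1) = A·x_{k-1}(s)² + B·x_{k-1}(s) + C. In particular x_k(s)x_k(s-1) is a polynomial of degree at most 2 in x_{k-1}(s). -/
/-- For the q-quadratic lattice `x_k(s) = c₁ r^{2s+k} + c₂ r^{-(2s+k)} + c₃`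
(with `r = q^{1/2}`), there exist constants `A, B, C` depending only on
`r, c₁, c₂, c₃` such that for all integers `s` and `k`,
`x_k(s) · x_k(s-1) = A · x_{k-1}(s)² + B · x_{k-1}(s) + C`. -/
theorem lattice_product_quadratic (r c₁ c₂ c₃ : ℂ) (hr : r ≠ 0) :
    ∃ A B C : ℂ, ∀ s k : ℤ,
      ((fun m : ℤ => c₁ * r ^ m + c₂ * r ^ (-m) + c₃) (2 * s + k)) *
        ((fun m : ℤ => c₁ * r ^ m + c₂ * r ^ (-m) + c₃) (2 * (s - 1) + k)) =
      A * ((fun m : ℤ => c₁ * r ^ m + c₂ * r ^ (-m) + c₃) (2 * s + (k - 1))) ^ 2 +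
        B * ((fun m : ℤ => c₁ * r ^ m + c₂ * r ^ (-m) + c₃) (2 * s + (k - 1))) + C := by
  refine ⟨1, c₃ * (r + r⁻¹ - 2),
    c₁ * c₂ * (r ^ 2 + (r ^ 2)⁻¹ - 2) - c₃ ^ 2 * (r + r⁻¹ - 2), fun s k => ?_⟩
  simp only
  have h1 : 2 * s + k = (2 * s + (k - 1)) + 1 := by ring
  have h2 : 2 * (s - 1) + k = (2 * s + (k - 1)) - 1 := by ring
  rw [h1, h2]
  have hu : r ^ (2 * s + (k - 1)) ≠ 0 := zpow_ne_zero _ hr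
  simp only [zpow_neg]
  rw [zpow_add₀ hr _ 1, zpow_sub₀ hr _ 1, zpow_one]
  generalize r ^ (2 * s + (k - 1)) = u at hu ⊢
  field_simp
  ring
end

section
/- Let x(s) = c₁q^s + c₂q^{-s} + c₃ be a q-quadratic lattice with x(s+1) ≠ x(s) for all s, x₁(s) = x(s+1/2), Δ^{(1)}f(s) = (f(s+1)−f(s))/(x(s+1)−x(s)), and Mf(s) = (f(s+1)+f(s))/2. Then for any function p : ℤ → ℂ and every integer s, Δ^{(1)}(x·p)(s) = M p(s) + α_q(1)·x₁(s)·Δ^{(1)}p(s) + c₃·(1 − α_q(1))·Δ^{(1)}p(s), where α_q(1) = (q^{1/2}+q^{-1/2})/2. -/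
/-- For the q-quadratic lattice `x(s) = c₁ q^s + c₂ q^{-s} + c₃` (encoded via
`X m := c₁ r^m + c₂ r^{-m} + c₃` with `r = q^{1/2}`, so `x(s) = X (2s)` and
`x₁(s) = X (2s+1)`), with `Δ^{(1)}f(s) = (f(s+1)−f(s))/(x(s+1)−x(s))` and
`Mf(s) = (f(s+1)+f(s))/2`, one has for every `p : ℤ → ℂ` and integer `s`:
`Δ^{(1)}(x·p)(s) = Mp(s) + α_q(1) x₁(s) Δ^{(1)}p(s) + c₃(1−α_q(1)) Δ^{(1)}p(s)`,
where `α_q(1) = (r + r⁻¹)/2`. -/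
theorem mean_process_xp (r c₁ c₂ c₃ : ℂ) (hr : r ≠ 0)
    (X : ℤ → ℂ) (hX : ∀ m : ℤ, X m = c₁ * r ^ m + c₂ * r ^ (-m) + c₃)
    (hx : ∀ s : ℤ, X (2 * (s + 1)) ≠ X (2 * s))
    (p : ℤ → ℂ) (s : ℤ) :
    (X (2 * (s + 1)) * p (s + 1) - X (2 * s) * p s) / (X (2 * (s + 1)) - X (2 * s)) =
      (p (s + 1) + p s) / 2 +
        ((r + r⁻¹) / 2) * X (2 * s + 1) *
          ((p (s + 1) - p s) / (X (2 * (s + 1)) - X (2 * s))) +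
        c₃ * (1 - (r + r⁻¹) / 2) *
          ((p (s + 1) - p s) / (X (2 * (s + 1)) - X (2 * s))) := by
  have hD : X (2 * (s + 1)) - X (2 * s) ≠ 0 := sub_ne_zero.mpr (hx s)
  have e1 : r ^ (2 * (s + 1)) = r ^ (2 * s + 1) * r := by
    rw [show 2 * (s + 1) = (2 * s + 1) + 1 by ring, zpow_add₀ hr, zpow_one]
  have e2 : r ^ (2 * s) = r ^ (2 * s + 1) * r⁻¹ := by
    rw [show 2 * s = (2 * s + 1) + (-1) by ring, zpow_add₀ hr, zpow_neg_one]; norm_num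
  have e3 : r ^ (-(2 * (s + 1))) = r ^ (-(2 * s + 1)) * r⁻¹ := by
    rw [show -(2 * (s + 1)) = -(2 * s + 1) + (-1) by ring, zpow_add₀ hr, zpow_neg_one]
  have e4 : r ^ (-(2 * s)) = r ^ (-(2 * s + 1)) * r := by
    rw [show -(2 * s) = -(2 * s + 1) + 1 by ring, zpow_add₀ hr, zpow_one]
  have hsum : X (2 * (s + 1)) + X (2 * s) =
      (r + r⁻¹) * X (2 * s + 1) + c₃ * (2 - (r + r⁻¹)) := by
    rw [hX, hX, hX, e1, e2, e3, e4]; ring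
  have key : X (2 * (s + 1)) * p (s + 1) - X (2 * s) * p s =
      ((p (s + 1) + p s) / 2) * (X (2 * (s + 1)) - X (2 * s)) +
        (((r + r⁻¹) / 2) * X (2 * s + 1) + c₃ * (1 - (r + r⁻¹) / 2)) *
          (p (s + 1) - p s) := by
    linear_combination (p (s + 1) - p s) / 2 * hsum
  rw [key, add_div, mul_div_cancel_right₀ _ hD, mul_div_assoc]
  ring
end

section
/- Divided difference of powers: Let x(s) = c₁q^s + c₂q^{-s} + c₃ with c₁c₂ ≠ 0, q not a root of unity and q ≠ 0, and assume x(s+1) ≠ x(s) for all s. Then for every n ≥ 1 there exists a polynomial r of degree n−1 with leading coefficient [n]_q such that for all integers s, (x(s+1)^n − x(s)^n)/(x(s+1) − x(s)) = r(x₁(s)), where x₁(s) = x(s+1/2) and [n]_q = (q^{n/2}−q^{-n/2})/(q^{1/2}−q^{-1/2}). -/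
open Polynomial

/-- `S` : the polynomial with `S(x₁(s)) = x(s+1) + x(s)`. -/
noncomputable def ddS (r c₃ : ℂ) : Polynomial ℂ :=
  C (r + r⁻¹) * X + C ((2 - (r + r⁻¹)) * c₃)

/-- `P` : the polynomial with `P(x₁(s)) = x(s+1) * x(s)`. -/
noncomputable def ddP (r c₁ c₂ c₃ : ℂ) : Polynomial ℂ :=
  X ^ 2 + C (((r + r⁻¹) - 2) * c₃) * X +
    C ((2 - (r + r⁻¹)) * c₃ ^ 2 + c₁ * c₂ * (r - r⁻¹) ^ 2)

/-- The divided-difference polynomials, via `h_{n+2} = S h_{n+1} - P h_n`. -/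
noncomputable def ddh (r c₁ c₂ c₃ : ℂ) : ℕ → Polynomial ℂ
  | 0 => 0
  | 1 => 1
  | (n + 2) => ddS r c₃ * ddh r c₁ c₂ c₃ (n + 1) - ddP r c₁ c₂ c₃ * ddh r c₁ c₂ c₃ n

/-- symmetric q-number, in `ℕ`-power form. -/
noncomputable def ddq (r : ℂ) (m : ℕ) : ℂ := (r ^ m - (r ^ m)⁻¹) / (r - r⁻¹)

lemma ddq_one (r : ℂ) (hr2 : r - r⁻¹ ≠ 0) : ddq r 1 = 1 := by
  simp only [ddq, pow_one]
  exact div_self hr2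

lemma ddq_two (r : ℂ) (hr : r ≠ 0) (hr2 : r - r⁻¹ ≠ 0) : ddq r 2 = r + r⁻¹ := by
  rw [ddq, div_eq_iff hr2]
  field_simp
  ring

lemma ddq_rec (r : ℂ) (hr : r ≠ 0) (hr2 : r - r⁻¹ ≠ 0) (m : ℕ) :
    (r + r⁻¹) * ddq r (m + 1) - ddq r m = ddq r (m + 2) := by
  unfold ddq
  rw [← mul_div_assoc, div_sub_div_same]
  congr 1
  simp only [pow_succ, mul_inv_rev]
  linear_combination (r ^ m - (r ^ m)⁻¹) * mul_inv_cancel₀ hr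

lemma ddq_ne (r : ℂ) (hr : r ≠ 0) (hr2 : r - r⁻¹ ≠ 0)
    (hroot : ∀ m : ℕ, 1 ≤ m → (r ^ 2) ^ m ≠ 1) (m : ℕ) (hm : 1 ≤ m) : ddq r m ≠ 0 := by
  unfold ddq
  apply div_ne_zero _ hr2
  intro h
  apply hroot m hm
  have hrm : r ^ m ≠ 0 := pow_ne_zero _ hr
  have := sub_eq_zero.mp h
  calc (r ^ 2) ^ m = r ^ m * r ^ m := by ring
    _ = r ^ m * (r ^ m)⁻¹ := by rw [← this]
    _ = 1 := mul_inv_cancel₀ hrm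

lemma ddS_natDegree_le (r c₃ : ℂ) : (ddS r c₃).natDegree ≤ 1 := by
  unfold ddS; compute_degree

lemma ddP_natDegree_le (r c₁ c₂ c₃ : ℂ) : (ddP r c₁ c₂ c₃).natDegree ≤ 2 := by
  unfold ddP; compute_degree

lemma ddS_mul_coeff (r c₃ : ℂ) (p : Polynomial ℂ) (k : ℕ) :
    (ddS r c₃ * p).coeff (k + 1) =
      (r + r⁻¹) * p.coeff k + ((2 - (r + r⁻¹)) * c₃) * p.coeff (k + 1) := by
  have : ddS r c₃ * p = C (r + r⁻¹) * (X * p) + C ((2 - (r + r⁻¹)) * c₃) * p := by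
    unfold ddS; ring
  rw [this]
  simp only [coeff_add, coeff_C_mul, coeff_X_mul]

lemma ddP_mul_coeff (r c₁ c₂ c₃ : ℂ) (p : Polynomial ℂ) (k : ℕ) :
    (ddP r c₁ c₂ c₃ * p).coeff (k + 2) =
      p.coeff k + (((r + r⁻¹) - 2) * c₃) * p.coeff (k + 1) +
        ((2 - (r + r⁻¹)) * c₃ ^ 2 + c₁ * c₂ * (r - r⁻¹) ^ 2) * p.coeff (k + 2) := by
  have : ddP r c₁ c₂ c₃ * p = X ^ 2 * p + C (((r + r⁻¹) - 2) * c₃) * (X * p) +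
      C ((2 - (r + r⁻¹)) * c₃ ^ 2 + c₁ * c₂ * (r - r⁻¹) ^ 2) * p := by
    unfold ddP; ring
  rw [this]
  have h2 : (X ^ 2 * p).coeff (k + 2) = p.coeff k := coeff_X_pow_mul p 2 k
  simp only [coeff_add, coeff_C_mul, coeff_X_mul, h2]

lemma ddh_deg (r c₁ c₂ c₃ : ℂ) (hr : r ≠ 0) (hr2 : r - r⁻¹ ≠ 0) :
    ∀ n : ℕ, (ddh r c₁ c₂ c₃ (n + 1)).natDegree ≤ n ∧
      (ddh r c₁ c₂ c₃ (n + 1)).coeff n = ddq r (n + 1) := by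
  have key : ∀ n : ℕ,
      ((ddh r c₁ c₂ c₃ (n + 1)).natDegree ≤ n ∧
        (ddh r c₁ c₂ c₃ (n + 1)).coeff n = ddq r (n + 1)) ∧
      ((ddh r c₁ c₂ c₃ (n + 2)).natDegree ≤ n + 1 ∧
        (ddh r c₁ c₂ c₃ (n + 2)).coeff (n + 1) = ddq r (n + 2)) := by
    intro n
    induction n with
    | zero =>
      have h2 : ddh r c₁ c₂ c₃ 2 = ddS r c₃ := by
        show ddS r c₃ * ddh r c₁ c₂ c₃ 1 - ddP r c₁ c₂ c₃ * ddh r c₁ c₂ c₃ 0 = _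
        simp [ddh]
      refine ⟨⟨by simp [ddh], by simp [ddh, ddq_one r hr2]⟩, ?_, ?_⟩
      · rw [h2]; exact ddS_natDegree_le r c₃
      · rw [h2, ddq_two r hr hr2]
        unfold ddS
        simp [coeff_add, coeff_C_mul]
    | succ k ih =>
      refine ⟨ih.2, ?_, ?_⟩
      · show (ddS r c₃ * ddh r c₁ c₂ c₃ (k + 2) -
            ddP r c₁ c₂ c₃ * ddh r c₁ c₂ c₃ (k + 1)).natDegree ≤ k + 2
        apply le_trans (natDegree_sub_le _ _)
        apply max_le
        · exact le_trans natDegree_mul_le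
            (le_trans (add_le_add (ddS_natDegree_le r c₃) ih.2.1) (by omega))
        · exact le_trans natDegree_mul_le
            (le_trans (add_le_add (ddP_natDegree_le r c₁ c₂ c₃) ih.1.1) (by omega))
      · show (ddS r c₃ * ddh r c₁ c₂ c₃ (k + 2) -
            ddP r c₁ c₂ c₃ * ddh r c₁ c₂ c₃ (k + 1)).coeff (k + 2) = ddq r (k + 3)
        have z1 : (ddh r c₁ c₂ c₃ (k + 2)).coeff (k + 2) = 0 :=
          coeff_eq_zero_of_natDegree_lt (lt_of_le_of_lt ih.2.1 (by omega))
        have z2 : (ddh r c₁ c₂ c₃ (k + 1)).coeff (k + 1) = 0 :=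
          coeff_eq_zero_of_natDegree_lt (lt_of_le_of_lt ih.1.1 (by omega))
        have z3 : (ddh r c₁ c₂ c₃ (k + 1)).coeff (k + 2) = 0 :=
          coeff_eq_zero_of_natDegree_lt (lt_of_le_of_lt ih.1.1 (by omega))
        rw [coeff_sub, show k + 2 = (k + 1) + 1 from rfl, ddS_mul_coeff,
          show (k : ℕ) + 1 + 1 = k + 2 from rfl, ddP_mul_coeff, z1, z2, z3,
          ih.1.2, ih.2.2]
        rw [show k + 3 = (k + 1) + 2 from rfl, ← ddq_rec r hr hr2 (k + 1)]
        ring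
  exact fun n => (key n).1

/-- Divided difference of powers on a q-quadratic lattice: for `q = r²` not zero
and not a root of unity, `c₁c₂ ≠ 0`, and `x(s) = c₁ r^{2s} + c₂ r^{-2s} + c₃` with
`x(s+1) ≠ x(s)`, for every `n ≥ 1` there is a polynomial of degree `n−1` with
leading coefficient `[n]_q = (r^n − r^{-n})/(r − r⁻¹)` such that
`(x(s+1)^n − x(s)^n)/(x(s+1) − x(s)) = r(x₁(s))` for all integers `s`, where
`x₁(s) = c₁ r^{2s+1} + c₂ r^{-(2s+1)} + c₃`. -/
theorem divided_difference_of_powers (r c₁ c₂ c₃ : ℂ) (hr : r ≠ 0)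
    (hroot : ∀ m : ℕ, 1 ≤ m → (r ^ 2) ^ m ≠ 1) (hc : c₁ * c₂ ≠ 0)
    (hx : ∀ s : ℤ, c₁ * r ^ (2 * (s + 1)) + c₂ * r ^ (-(2 * (s + 1))) + c₃ ≠
      c₁ * r ^ (2 * s) + c₂ * r ^ (-(2 * s)) + c₃)
    (n : ℕ) (hn : 1 ≤ n) :
    ∃ p : Polynomial ℂ, p.natDegree = n - 1 ∧
      p.leadingCoeff = (r ^ (n : ℤ) - r ^ (-(n : ℤ))) / (r - r⁻¹) ∧
      ∀ s : ℤ,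
        ((c₁ * r ^ (2 * (s + 1)) + c₂ * r ^ (-(2 * (s + 1))) + c₃) ^ n -
            (c₁ * r ^ (2 * s) + c₂ * r ^ (-(2 * s)) + c₃) ^ n) /
          ((c₁ * r ^ (2 * (s + 1)) + c₂ * r ^ (-(2 * (s + 1))) + c₃) -
            (c₁ * r ^ (2 * s) + c₂ * r ^ (-(2 * s)) + c₃)) =
        p.eval (c₁ * r ^ (2 * s + 1) + c₂ * r ^ (-(2 * s + 1)) + c₃) := by
  have hr2 : r - r⁻¹ ≠ 0 := by
    intro h
    apply hroot 1 le_rfl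
    have hre : r = r⁻¹ := sub_eq_zero.mp h
    calc (r ^ 2) ^ 1 = r * r := by ring
      _ = r * r⁻¹ := by rw [← hre]
      _ = 1 := mul_inv_cancel₀ hr
  set A : ℤ → ℂ := fun s => c₁ * r ^ (2 * (s + 1)) + c₂ * r ^ (-(2 * (s + 1))) + c₃ with hA
  set B : ℤ → ℂ := fun s => c₁ * r ^ (2 * s) + c₂ * r ^ (-(2 * s)) + c₃ with hB
  set Y : ℤ → ℂ := fun s => c₁ * r ^ (2 * s + 1) + c₂ * r ^ (-(2 * s + 1)) + c₃ with hY
  have zp : ∀ s : ℤ, r ^ (2 * (s + 1)) = r ^ (2 * s) * r * r ∧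
      r ^ (-(2 * (s + 1))) = (r ^ (2 * s) * r * r)⁻¹ ∧
      r ^ (2 * s + 1) = r ^ (2 * s) * r ∧
      r ^ (-(2 * s + 1)) = (r ^ (2 * s) * r)⁻¹ ∧
      r ^ (-(2 * s)) = (r ^ (2 * s))⁻¹ := by
    intro s
    have e1 : r ^ (2 * (s + 1)) = r ^ (2 * s) * r * r := by
      rw [show 2 * (s + 1) = 2 * s + 1 + 1 by ring, zpow_add_one₀ hr, zpow_add_one₀ hr]
    have e3 : r ^ (2 * s + 1) = r ^ (2 * s) * r := zpow_add_one₀ hr _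
    exact ⟨e1, by rw [zpow_neg, e1], e3, by rw [zpow_neg, e3], zpow_neg r _⟩
  have hSY : ∀ s : ℤ, (ddS r c₃).eval (Y s) = A s + B s := by
    intro s
    obtain ⟨e1, e2, e3, e4, e5⟩ := zp s
    have hw : (r : ℂ) ^ (2 * s) ≠ 0 := zpow_ne_zero _ hr
    simp only [ddS, eval_add, eval_mul, eval_C, eval_X, hA, hB, hY, e1, e2, e3, e4, e5]
    field_simp
    ring
  have hPY : ∀ s : ℤ, (ddP r c₁ c₂ c₃).eval (Y s) = A s * B s := by
    intro s
    obtain ⟨e1, e2, e3, e4, e5⟩ := zp s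
    have hw : (r : ℂ) ^ (2 * s) ≠ 0 := zpow_ne_zero _ hr
    simp only [ddP, eval_add, eval_mul, eval_pow, eval_C, eval_X, hA, hB, hY,
      e1, e2, e3, e4, e5, mul_inv]
    have hw1 : r ^ (2 * s) * (r ^ (2 * s))⁻¹ = 1 := mul_inv_cancel₀ hw
    have hr1 : r * r⁻¹ = 1 := mul_inv_cancel₀ hr
    linear_combination (2 * c₁ * c₂ * r * r⁻¹ - c₁ * c₂ * (r ^ 2 + (r⁻¹) ^ 2)) * hw1 +
      (c₁ * c₃ * r ^ (2 * s) + c₂ * c₃ * (r ^ (2 * s))⁻¹) * hr1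
  have ev : ∀ m : ℕ, ∀ s : ℤ,
      A s ^ m - B s ^ m = (A s - B s) * (ddh r c₁ c₂ c₃ m).eval (Y s) := by
    have key : ∀ m : ℕ, (∀ s : ℤ,
        A s ^ m - B s ^ m = (A s - B s) * (ddh r c₁ c₂ c₃ m).eval (Y s)) ∧
        (∀ s : ℤ, A s ^ (m + 1) - B s ^ (m + 1) =
          (A s - B s) * (ddh r c₁ c₂ c₃ (m + 1)).eval (Y s)) := by
      intro m
      induction m with
      | zero => exact ⟨fun s => by simp [ddh], fun s => by simp [ddh]⟩
      | succ k ih =>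
        refine ⟨ih.2, fun s => ?_⟩
        show A s ^ (k + 2) - B s ^ (k + 2) =
          (A s - B s) * (ddS r c₃ * ddh r c₁ c₂ c₃ (k + 1) -
            ddP r c₁ c₂ c₃ * ddh r c₁ c₂ c₃ k).eval (Y s)
        rw [eval_sub, eval_mul, eval_mul, hSY s, hPY s]
        linear_combination (A s + B s) * ih.2 s - A s * B s * ih.1 s
    exact fun m => (key m).1
  obtain ⟨m, rfl⟩ : ∃ m, n = m + 1 := ⟨n - 1, by omega⟩
  obtain ⟨hd1, hd2⟩ := ddh_deg r c₁ c₂ c₃ hr hr2 m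
  have hq : ddq r (m + 1) ≠ 0 := ddq_ne r hr hr2 hroot (m + 1) (by omega)
  have hdeg : (ddh r c₁ c₂ c₃ (m + 1)).natDegree = m :=
    le_antisymm hd1 (le_natDegree_of_ne_zero (by rw [hd2]; exact hq))
  refine ⟨ddh r c₁ c₂ c₃ (m + 1), by simp [hdeg], ?_, ?_⟩
  · rw [leadingCoeff, hdeg, hd2, ddq]
    rw [zpow_neg, zpow_natCast]
  · intro s
    have hne : A s - B s ≠ 0 := sub_ne_zero.mpr (hx s)
    rw [div_eq_iff hne, ev (m + 1) s]
    ring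
end

section
/- Forward mean of powers: Let x(s) = c₁q^s + c₂q^{-s} + c₃ be a q-quadratic lattice and x₁(s) = x(s+1/2). Then for every n ≥ 0 there exists a polynomial r of degree at most n whose leading coefficient equals α_q(n) = (q^{n/2}+q^{-n/2})/2, such that for all integers s, (x(s+1)^n + x(s)^n)/2 = r(x₁(s)). -/
open Polynomial

/-- The sequence of polynomials: p₀ = 1, p₁ = (A/2)X + B/2,
    p_{n+2} = (A X + B) p_{n+1} - (X² + e X + f) p_n. -/
noncomputable def pp (A B e f : ℂ) : ℕ → Polynomial ℂ
  | 0 => 1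
  | 1 => C (A / 2) * X + C (B / 2)
  | (n + 2) => (C A * (X * pp A B e f (n + 1)) + C B * pp A B e f (n + 1))
      - (pp A B e f n * X ^ 2 + C e * (X * pp A B e f n) + C f * pp A B e f n)

lemma pp_deg (A B e f : ℂ) : ∀ n, (pp A B e f n).natDegree ≤ n
  | 0 => by simp [pp]
  | 1 => by
      refine le_trans (natDegree_add_le _ _) ?_
      simp only [natDegree_C, max_le_iff]
      constructor
      · exact le_trans (natDegree_mul_le) (by simp)
      · simp
  | (n + 2) => by
      have h1 := pp_deg A B e f (n + 1)
      have h0 := pp_deg A B e f n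
      show ((C A * (X * pp A B e f (n + 1)) + C B * pp A B e f (n + 1))
        - (pp A B e f n * X ^ 2 + C e * (X * pp A B e f n) + C f * pp A B e f n)).natDegree ≤ n + 2
      refine le_trans (natDegree_sub_le _ _) (max_le ?_ ?_)
      · refine le_trans (natDegree_add_le _ _) (max_le ?_ ?_)
        · refine le_trans natDegree_mul_le ?_
          simp only [natDegree_C, zero_add]
          refine le_trans natDegree_mul_le ?_
          simp only [natDegree_X]
          omega
        · refine le_trans natDegree_mul_le ?_
          simp only [natDegree_C, zero_add]
          omega
      · refine le_trans (natDegree_add_le _ _) (max_le (le_trans (natDegree_add_le _ _) (max_le ?_ ?_)) ?_)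
        · refine le_trans natDegree_mul_le ?_
          simp only [natDegree_pow, natDegree_X]
          omega
        · refine le_trans natDegree_mul_le ?_
          simp only [natDegree_C, zero_add]
          refine le_trans natDegree_mul_le ?_
          simp only [natDegree_X]
          omega
        · refine le_trans natDegree_mul_le ?_
          simp only [natDegree_C, zero_add]
          omega

lemma pp_coeff (r B e f : ℂ) (hr : r ≠ 0) :
    ∀ n, (pp (r + r⁻¹) B e f n).coeff n = (r ^ (n : ℤ) + r ^ (-(n : ℤ))) / 2
  | 0 => by simp [pp]
  | 1 => by
      simp [pp, coeff_add, coeff_C_mul, coeff_C]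
  | (n + 2) => by
      set A := r + r⁻¹ with hA
      have h1 := pp_coeff r B e f hr (n + 1)
      have h0 := pp_coeff r B e f hr n
      have d1 : (pp A B e f (n + 1)).coeff (n + 2) = 0 :=
        coeff_eq_zero_of_natDegree_lt (lt_of_le_of_lt (pp_deg A B e f (n + 1)) (by omega))
      have d0 : (pp A B e f n).coeff (n + 2) = 0 :=
        coeff_eq_zero_of_natDegree_lt (lt_of_le_of_lt (pp_deg A B e f n) (by omega))
      have d0' : (pp A B e f n).coeff (n + 1) = 0 :=
        coeff_eq_zero_of_natDegree_lt (lt_of_le_of_lt (pp_deg A B e f n) (by omega))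
      show ((C A * (X * pp A B e f (n + 1)) + C B * pp A B e f (n + 1))
        - (pp A B e f n * X ^ 2 + C e * (X * pp A B e f n) + C f * pp A B e f n)).coeff (n + 2)
        = (r ^ ((n : ℤ) + 2) + r ^ (-((n : ℤ) + 2))) / 2
      rw [coeff_sub, coeff_add, coeff_add, coeff_add, coeff_C_mul, coeff_C_mul, coeff_C_mul,
        coeff_C_mul, show n + 2 = (n + 1) + 1 from rfl, coeff_X_mul, coeff_X_mul,
        show (n + 1) + 1 = n + 2 from rfl, coeff_mul_X_pow, d1, d0, d0', h1, h0]
      push_cast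
      set m : ℤ := (n : ℤ) with hm
      have a1 : r * r ^ (m + 1) = r ^ (m + 2) := by
        rw [mul_comm, ← zpow_add_one₀ hr, show m + 1 + 1 = m + 2 by ring]
      have a2 : r⁻¹ * r ^ (m + 1) = r ^ m := by
        rw [zpow_add_one₀ hr, mul_comm r⁻¹, mul_assoc, mul_inv_cancel₀ hr, mul_one]
      have a3 : r * r ^ (-(m + 1)) = r ^ (-m) := by
        rw [mul_comm, ← zpow_add_one₀ hr, show -(m + 1) + 1 = -m by ring]
      have a4 : r⁻¹ * r ^ (-(m + 1)) = r ^ (-(m + 2)) := by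
        rw [show -(m + 2) = -(m + 1) - 1 by ring, zpow_sub_one₀ hr, mul_comm]
      rw [hA]
      linear_combination (a1 + a2 + a3 + a4) / 2

lemma pp_eval (A B e f a b y : ℂ) (hab : a + b = A * y + B)
    (hm : a * b = y ^ 2 + e * y + f) :
    ∀ n, (a ^ n + b ^ n) / 2 = (pp A B e f n).eval y
  | 0 => by simp [pp]
  | 1 => by
      simp only [pp, eval_add, eval_mul, eval_C, eval_X, pow_one]
      linear_combination hab / 2
  | (n + 2) => by
      have h1 := pp_eval A B e f a b y hab hm (n + 1)
      have h0 := pp_eval A B e f a b y hab hm n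
      show (a ^ (n + 2) + b ^ (n + 2)) / 2 =
        ((C A * (X * pp A B e f (n + 1)) + C B * pp A B e f (n + 1))
          - (pp A B e f n * X ^ 2 + C e * (X * pp A B e f n) + C f * pp A B e f n)).eval y
      simp only [eval_sub, eval_add, eval_mul, eval_C, eval_X, eval_pow]
      rw [← h1, ← h0]
      linear_combination ((a ^ (n + 1) + b ^ (n + 1)) / 2) * hab
        - ((a ^ n + b ^ n) / 2) * hm

/-- Forward mean of powers on a q-quadratic lattice: for every `n ≥ 0` there is a
polynomial of degree at most `n` whose coefficient of `X^n` equals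
`α_q(n) = (r^n + r^{-n})/2`, such that
`(x(s+1)^n + x(s)^n)/2 = r(x₁(s))` for all integers `s`, where
`x(s) = c₁ r^{2s} + c₂ r^{-2s} + c₃` and `x₁(s) = c₁ r^{2s+1} + c₂ r^{-(2s+1)} + c₃`. -/
theorem forward_mean_of_powers (r c₁ c₂ c₃ : ℂ) (hr : r ≠ 0) (n : ℕ) :
    ∃ p : Polynomial ℂ, p.natDegree ≤ n ∧
      p.coeff n = (r ^ (n : ℤ) + r ^ (-(n : ℤ))) / 2 ∧
      ∀ s : ℤ,
        ((c₁ * r ^ (2 * (s + 1)) + c₂ * r ^ (-(2 * (s + 1))) + c₃) ^ n +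
            (c₁ * r ^ (2 * s) + c₂ * r ^ (-(2 * s)) + c₃) ^ n) / 2 =
        p.eval (c₁ * r ^ (2 * s + 1) + c₂ * r ^ (-(2 * s + 1)) + c₃) := by
  set A : ℂ := r + r⁻¹ with hA
  set B : ℂ := 2 * c₃ - A * c₃ with hB
  set e : ℂ := (A - 2) * c₃ with he
  set f : ℂ := c₁ * c₂ * (r ^ 2 + r⁻¹ ^ 2 - 2) - (A - 2) * c₃ ^ 2 with hf
  refine ⟨pp A B e f n, pp_deg A B e f n, pp_coeff r B e f hr n, fun s => ?_⟩
  set v : ℂ := r ^ (2 * s + 1) with hv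
  have hvne : v ≠ 0 := zpow_ne_zero _ hr
  have k1 : r ^ (2 * (s + 1)) = v * r := by
    rw [hv, show 2 * (s + 1) = (2 * s + 1) + 1 by ring, zpow_add_one₀ hr]
  have k2 : r ^ (2 * s) = v * r⁻¹ := by
    rw [hv, show 2 * s = (2 * s + 1) - 1 by ring, zpow_sub_one₀ hr]
    ring_nf
  have k3 : r ^ (-(2 * (s + 1))) = v⁻¹ * r⁻¹ := by rw [zpow_neg, k1, mul_inv]
  have k4 : r ^ (-(2 * s)) = v⁻¹ * r := by
    rw [zpow_neg, k2, mul_inv, inv_inv]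
  have k5 : r ^ (-(2 * s + 1)) = v⁻¹ := by rw [zpow_neg, hv]
  rw [k1, k2, k3, k4, k5]
  refine pp_eval A B e f (c₁ * (v * r) + c₂ * (v⁻¹ * r⁻¹) + c₃)
    (c₁ * (v * r⁻¹) + c₂ * (v⁻¹ * r) + c₃) (c₁ * v + c₂ * v⁻¹ + c₃) ?_ ?_ n
  · rw [hB, hA]; field_simp; ring
  · rw [he, hf, hA]; field_simp; ring
end

section
/- Pearson equation for the Askey–Wilson weight at integer points: with σ(s) = −κ_q² q^{-2s+1/2}(q^s−a)(q^s−b)(q^s−c)(q^s−d) and ρ(s) = q^{-2s²}·(a,b,c,d;q)_s·(a,b,c,d;q)_{−s} for integer s ≥ 0 (where (a,b,c,d;q)_s = ∏ over the four parameters of the q-Pochhammer symbols, and (e;q)_{−k} = 1/∏_{j=1}^{k}(1−eq^{−j})), one has σ(s+1)ρ(s+1) = σ(−s)ρ(s) for all integers s ≥ 0 for which all the q-Pochhammer factors in ρ(s) and ρ(s+1) are nonzero denominators. -/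
open Finset

lemma aux_one (r e : ℂ) (hr : r ≠ 0) (s : ℕ)
    (h1 : 1 - e * (r^2)^(-((s:ℤ)+1)) ≠ 0) :
    ((r^2)^((s:ℤ)+1) - e) * (∏ j ∈ range (s+1), (1 - e*(r^2)^(j:ℤ))) *
      (∏ j ∈ Icc 1 (s+1), (1 - e*(r^2)^(-(j:ℤ))))⁻¹
    = (r^2)^(2*(s:ℤ)+1) * ((r^2)^(-(s:ℤ)) - e) *
      (∏ j ∈ range s, (1 - e*(r^2)^(j:ℤ))) *
      (∏ j ∈ Icc 1 s, (1 - e*(r^2)^(-(j:ℤ))))⁻¹ := by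
  have hq : (r^2 : ℂ) ≠ 0 := pow_ne_zero _ hr
  have key : ∀ n : ℤ, (r^2)^n - e = (r^2)^n * (1 - e * (r^2)^(-n)) := by
    intro n
    rw [mul_sub, mul_one, mul_comm e, ← mul_assoc, ← zpow_add₀ hq]
    simp
  rw [prod_range_succ, prod_Icc_succ_top (Nat.le_add_left 1 s), key, key, mul_inv]
  set P := ∏ j ∈ range s, (1 - e*(r^2)^(j:ℤ)) with hP
  set D := ∏ j ∈ Icc 1 s, (1 - e*(r^2)^(-(j:ℤ))) with hD
  push_cast
  have hc : (1 - e * (r^2)^(-((s:ℤ)+1))) * (1 - e * (r^2)^(-((s:ℤ)+1)))⁻¹ = 1 :=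
    mul_inv_cancel₀ h1
  have e1 : ((r^2:ℂ))^(2*(s:ℤ)+1) * (r^2)^(-(s:ℤ)) = (r^2)^((s:ℤ)+1) := by
    rw [← zpow_add₀ hq]; ring_nf
  simp only [neg_neg]
  linear_combination ((r^2:ℂ)^((s:ℤ)+1) * P * (1 - e*(r^2)^((s:ℤ))) * D⁻¹) * hc -
    (((1 - e*(r^2)^((s:ℤ))) * P * D⁻¹)) * e1

open Finset in
/-- Pearson equation for the Askey–Wilson weight at integer points `s ≥ 0`:
with `q = r²`, `κ_q = r − r⁻¹`,
`σ(t) = −κ_q² q^{−2t+1/2} (q^t−a)(q^t−b)(q^t−c)(q^t−d)`,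
`(e;q)_s = ∏_{j<s}(1−eq^j)`, `(e;q)_{−s} = (∏_{j=1}^{s}(1−eq^{−j}))⁻¹`, and
`ρ(s) = q^{−2s²} (a,b,c,d;q)_s (a,b,c,d;q)_{−s}`, assuming all the inverted
q-Pochhammer denominators are nonzero, one has `σ(s+1)ρ(s+1) = σ(−s)ρ(s)`. -/
theorem askey_wilson_pearson (r a b c d : ℂ) (hr : r ≠ 0) (s : ℕ)
    (σ : ℤ → ℂ)
    (hσ : ∀ t : ℤ, σ t = -(r - r⁻¹) ^ 2 * r ^ (1 - 4 * t) *
      ((r ^ 2) ^ t - a) * ((r ^ 2) ^ t - b) * ((r ^ 2) ^ t - c) * ((r ^ 2) ^ t - d))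
    (poch : ℂ → ℕ → ℂ) (hpoch : ∀ e k, poch e k = ∏ j ∈ range k, (1 - e * (r ^ 2) ^ (j : ℤ)))
    (pochNeg : ℂ → ℕ → ℂ)
    (hpochNeg : ∀ e k, pochNeg e k = (∏ j ∈ Icc 1 k, (1 - e * (r ^ 2) ^ (-(j : ℤ))))⁻¹)
    (ρ : ℕ → ℂ)
    (hρ : ∀ k : ℕ, ρ k = (r ^ 2) ^ (-(2 * (k : ℤ) ^ 2)) *
      (poch a k * poch b k * poch c k * poch d k) *
      (pochNeg a k * pochNeg b k * pochNeg c k * pochNeg d k))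
    (hden : ∀ e ∈ ({a, b, c, d} : Set ℂ), ∀ j : ℕ, 1 ≤ j → j ≤ s + 1 →
      1 - e * (r ^ 2) ^ (-(j : ℤ)) ≠ 0) :
    σ ((s : ℤ) + 1) * ρ (s + 1) = σ (-(s : ℤ)) * ρ s := by
  have hq : (r^2 : ℂ) ≠ 0 := pow_ne_zero _ hr
  have hd' : ∀ e ∈ ({a, b, c, d} : Set ℂ), 1 - e * (r^2)^(-((s:ℤ)+1)) ≠ 0 := by
    intro e he
    have := hden e he (s+1) (by omega) (by omega)
    rwa [show ((↑(s+1) : ℤ)) = (s:ℤ)+1 by push_cast; ring] at this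
  have Ha := aux_one r a hr s (hd' a (by simp))
  have Hb := aux_one r b hr s (hd' b (by simp))
  have Hc := aux_one r c hr s (hd' c (by simp))
  have Hd := aux_one r d hr s (hd' d (by simp))
  have h2 : ∀ m : ℤ, ((r:ℂ)^2)^m = r^(2*m) := by
    intro m; rw [← zpow_natCast r 2, ← zpow_mul]; norm_num
  have hpow : r ^ (1-4*((s:ℤ)+1)) * (r^2)^(-(2*((s:ℤ)+1)^2)) * ((r^2)^(2*(s:ℤ)+1))^4
      = r ^ (1-4*(-(s:ℤ))) * (r^2)^(-(2*(s:ℤ)^2)) := by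
    rw [h2, h2, h2, ← zpow_natCast ((r:ℂ)^(2*(2*(s:ℤ)+1))) 4, ← zpow_mul,
      ← zpow_add₀ hr, ← zpow_add₀ hr, ← zpow_add₀ hr]
    congr 1; push_cast; ring
  rw [hσ, hσ, hρ, hρ]
  simp only [hpoch, hpochNeg]
  push_cast
  calc -(r - r⁻¹) ^ 2 * r ^ (1 - 4 * ((s:ℤ) + 1)) * ((r ^ 2) ^ ((s:ℤ)+1) - a) *
        ((r ^ 2) ^ ((s:ℤ)+1) - b) * ((r ^ 2) ^ ((s:ℤ)+1) - c) * ((r ^ 2) ^ ((s:ℤ)+1) - d) *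
        ((r ^ 2) ^ (-(2 * ((s:ℤ)+1) ^ 2)) *
        ((∏ j ∈ range (s+1), (1 - a * (r ^ 2) ^ (j:ℤ))) * (∏ j ∈ range (s+1), (1 - b * (r ^ 2) ^ (j:ℤ))) *
          (∏ j ∈ range (s+1), (1 - c * (r ^ 2) ^ (j:ℤ))) * (∏ j ∈ range (s+1), (1 - d * (r ^ 2) ^ (j:ℤ)))) *
        ((∏ j ∈ Icc 1 (s+1), (1 - a * (r ^ 2) ^ (-(j:ℤ))))⁻¹ * (∏ j ∈ Icc 1 (s+1), (1 - b * (r ^ 2) ^ (-(j:ℤ))))⁻¹ *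
          (∏ j ∈ Icc 1 (s+1), (1 - c * (r ^ 2) ^ (-(j:ℤ))))⁻¹ * (∏ j ∈ Icc 1 (s+1), (1 - d * (r ^ 2) ^ (-(j:ℤ))))⁻¹))
      = -(r - r⁻¹) ^ 2 * r ^ (1 - 4 * ((s:ℤ) + 1)) * (r ^ 2) ^ (-(2 * ((s:ℤ)+1) ^ 2)) *
        ((((r ^ 2) ^ ((s:ℤ)+1) - a) * (∏ j ∈ range (s+1), (1 - a * (r ^ 2) ^ (j:ℤ))) * (∏ j ∈ Icc 1 (s+1), (1 - a * (r ^ 2) ^ (-(j:ℤ))))⁻¹) *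
         (((r ^ 2) ^ ((s:ℤ)+1) - b) * (∏ j ∈ range (s+1), (1 - b * (r ^ 2) ^ (j:ℤ))) * (∏ j ∈ Icc 1 (s+1), (1 - b * (r ^ 2) ^ (-(j:ℤ))))⁻¹) *
         (((r ^ 2) ^ ((s:ℤ)+1) - c) * (∏ j ∈ range (s+1), (1 - c * (r ^ 2) ^ (j:ℤ))) * (∏ j ∈ Icc 1 (s+1), (1 - c * (r ^ 2) ^ (-(j:ℤ))))⁻¹) *
         (((r ^ 2) ^ ((s:ℤ)+1) - d) * (∏ j ∈ range (s+1), (1 - d * (r ^ 2) ^ (j:ℤ))) * (∏ j ∈ Icc 1 (s+1), (1 - d * (r ^ 2) ^ (-(j:ℤ))))⁻¹)) := by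
        ring
    _ = -(r - r⁻¹) ^ 2 * r ^ (1 - 4 * ((s:ℤ) + 1)) * (r ^ 2) ^ (-(2 * ((s:ℤ)+1) ^ 2)) *
        (((r ^ 2) ^ (2*(s:ℤ)+1) * ((r ^ 2) ^ (-(s:ℤ)) - a) * (∏ j ∈ range s, (1 - a * (r ^ 2) ^ (j:ℤ))) * (∏ j ∈ Icc 1 s, (1 - a * (r ^ 2) ^ (-(j:ℤ))))⁻¹) *
         ((r ^ 2) ^ (2*(s:ℤ)+1) * ((r ^ 2) ^ (-(s:ℤ)) - b) * (∏ j ∈ range s, (1 - b * (r ^ 2) ^ (j:ℤ))) * (∏ j ∈ Icc 1 s, (1 - b * (r ^ 2) ^ (-(j:ℤ))))⁻¹) *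
         ((r ^ 2) ^ (2*(s:ℤ)+1) * ((r ^ 2) ^ (-(s:ℤ)) - c) * (∏ j ∈ range s, (1 - c * (r ^ 2) ^ (j:ℤ))) * (∏ j ∈ Icc 1 s, (1 - c * (r ^ 2) ^ (-(j:ℤ))))⁻¹) *
         ((r ^ 2) ^ (2*(s:ℤ)+1) * ((r ^ 2) ^ (-(s:ℤ)) - d) * (∏ j ∈ range s, (1 - d * (r ^ 2) ^ (j:ℤ))) * (∏ j ∈ Icc 1 s, (1 - d * (r ^ 2) ^ (-(j:ℤ))))⁻¹)) := by
        rw [Ha, Hb, Hc, Hd]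
    _ = -(r - r⁻¹) ^ 2 * r ^ (1 - 4 * (-(s:ℤ))) * ((r ^ 2) ^ (-(s:ℤ)) - a) *
        ((r ^ 2) ^ (-(s:ℤ)) - b) * ((r ^ 2) ^ (-(s:ℤ)) - c) * ((r ^ 2) ^ (-(s:ℤ)) - d) *
        ((r ^ 2) ^ (-(2 * (s:ℤ) ^ 2)) *
        ((∏ j ∈ range s, (1 - a * (r ^ 2) ^ (j:ℤ))) * (∏ j ∈ range s, (1 - b * (r ^ 2) ^ (j:ℤ))) *
          (∏ j ∈ range s, (1 - c * (r ^ 2) ^ (j:ℤ))) * (∏ j ∈ range s, (1 - d * (r ^ 2) ^ (j:ℤ)))) *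
        ((∏ j ∈ Icc 1 s, (1 - a * (r ^ 2) ^ (-(j:ℤ))))⁻¹ * (∏ j ∈ Icc 1 s, (1 - b * (r ^ 2) ^ (-(j:ℤ))))⁻¹ *
          (∏ j ∈ Icc 1 s, (1 - c * (r ^ 2) ^ (-(j:ℤ))))⁻¹ * (∏ j ∈ Icc 1 s, (1 - d * (r ^ 2) ^ (-(j:ℤ))))⁻¹)) := by
        linear_combination (-(r - r⁻¹) ^ 2 * ((r ^ 2) ^ (-(s:ℤ)) - a) * ((r ^ 2) ^ (-(s:ℤ)) - b) *
          ((r ^ 2) ^ (-(s:ℤ)) - c) * ((r ^ 2) ^ (-(s:ℤ)) - d) *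
          ((∏ j ∈ range s, (1 - a * (r ^ 2) ^ (j:ℤ))) * (∏ j ∈ range s, (1 - b * (r ^ 2) ^ (j:ℤ))) *
            (∏ j ∈ range s, (1 - c * (r ^ 2) ^ (j:ℤ))) * (∏ j ∈ range s, (1 - d * (r ^ 2) ^ (j:ℤ)))) *
          ((∏ j ∈ Icc 1 s, (1 - a * (r ^ 2) ^ (-(j:ℤ))))⁻¹ * (∏ j ∈ Icc 1 s, (1 - b * (r ^ 2) ^ (-(j:ℤ))))⁻¹ *
            (∏ j ∈ Icc 1 s, (1 - c * (r ^ 2) ^ (-(j:ℤ))))⁻¹ * (∏ j ∈ Icc 1 s, (1 - d * (r ^ 2) ^ (-(j:ℤ))))⁻¹)) * hpow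
end

section
/- Structure relation from two three-term recurrences: Let x : ½ℤ → ℂ be a lattice with x(s+1) ≠ x(s) for all integers s, x₁(s) = x(s+1/2), Δ^{(1)}f(s) = (f(s+1)−f(s))/(x(s+1)−x(s)), Mf(s) = (f(s+1)+f(s))/2, and suppose the mean identity M x(s) = α·x₁(s) + β holds for some constants α, β ∈ ℂ and all s. Let (p_n)_{n ≥ 0} be functions ℤ → ℂ with p_{−1} = 0 satisfying x(s)p_n(s) = α_n p_{n+1}(s) + β_n p_n(s) + γ_n p_{n−1}(s) for all n ≥ 0 and s, and suppose additionally x₁(s)·Δ^{(1)}p_n(s) = α'_n Δ^{(1)}p_{n+1}(s) + β'_n Δ^{(1)}p_n(s) + γ'_n Δ^{(1)}p_{n−1}(s) for all n ≥ 0 and s. Then for all n ≥ 0 and all s: M p_n(s) = (α_n − α·α'_n)·Δ^{(1)}p_{n+1}(s) + (β_n − β − α·β'_n)·Δ^{(1)}p_n(s) + (γ_n − α·γ'_n)·Δ^{(1)}p_{n−1}(s). -/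
/-- Structure relation from two three-term recurrences. With
`Δ^{(1)}f(s) = (f(s+1)−f(s))/(x(s+1)−x(s))`, `Mf(s) = (f(s+1)+f(s))/2`, the mean
identity `Mx(s) = α x₁(s) + β`, the TTRR for `(p_n)` (with `p_{−1}=0`) and a TTRR
for `(Δ^{(1)}p_n)` on `x₁`, one gets, for all `n ≥ 0` and `s`:
`Mp_n(s) = (α_n − α α'_n) Δ^{(1)}p_{n+1}(s) + (β_n − β − α β'_n) Δ^{(1)}p_n(s)
          + (γ_n − α γ'_n) Δ^{(1)}p_{n−1}(s)`. -/
theorem structure_relation_from_ttrr (x x₁ : ℤ → ℂ)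
    (hx : ∀ s : ℤ, x (s + 1) ≠ x s)
    (α β : ℂ)
    (hmean : ∀ s : ℤ, (x (s + 1) + x s) / 2 = α * x₁ s + β)
    (p : ℤ → ℤ → ℂ) (hpneg : ∀ s : ℤ, p (-1) s = 0)
    (a b c a' b' c' : ℤ → ℂ)
    (httrr : ∀ n : ℤ, 0 ≤ n → ∀ s : ℤ,
      x s * p n s = a n * p (n + 1) s + b n * p n s + c n * p (n - 1) s)
    (httrr' : ∀ n : ℤ, 0 ≤ n → ∀ s : ℤ,
      x₁ s * ((p n (s + 1) - p n s) / (x (s + 1) - x s)) =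
        a' n * ((p (n + 1) (s + 1) - p (n + 1) s) / (x (s + 1) - x s)) +
          b' n * ((p n (s + 1) - p n s) / (x (s + 1) - x s)) +
          c' n * ((p (n - 1) (s + 1) - p (n - 1) s) / (x (s + 1) - x s))) :
    ∀ n : ℤ, 0 ≤ n → ∀ s : ℤ,
      (p n (s + 1) + p n s) / 2 =
        (a n - α * a' n) * ((p (n + 1) (s + 1) - p (n + 1) s) / (x (s + 1) - x s)) +
          (b n - β - α * b' n) * ((p n (s + 1) - p n s) / (x (s + 1) - x s)) +
          (c n - α * c' n) * ((p (n - 1) (s + 1) - p (n - 1) s) / (x (s + 1) - x s)) := by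
  intro n hn s
  have hd : x (s + 1) - x s ≠ 0 := sub_ne_zero.mpr (hx s)
  have h1 := httrr n hn (s + 1)
  have h2 := httrr n hn s
  have h3 := httrr' n hn s
  have h4 := hmean s
  field_simp at h3
  have key : (x (s + 1) - x s) * ((p n (s + 1) + p n s) / 2) =
      (a n - α * a' n) * (p (n + 1) (s + 1) - p (n + 1) s) +
        (b n - β - α * b' n) * (p n (s + 1) - p n s) +
        (c n - α * c' n) * (p (n - 1) (s + 1) - p (n - 1) s) := by
    linear_combination h1 - h2 - α * h3 - (p n (s + 1) - p n s) * hmean s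
  field_simp
  linear_combination 2 * key
end
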